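/- For every n ≥ 1, H_n = ∑_{(m_1,…,m_n)} n! · (∏_{j=1}^{n} B_j^{m_j}) / (∏_{j=1}^{n} m_j! · (j!)^{m_j}), where the sum is over all n-tuples (m_1,…,m_n) of nonnegative integers with ∑_{j=1}^{n} j·m_j = n (here m_j is the number of blocks of size j in the underlying set partition). -/

import Mathlib

open Finset PowerSeries Filter Nat

/-- `L` is an ordered set partition of the finite set `S`: a finite sequence of pairwise
disjoint nonempty subsets of `S` whose union is `S`. -/
def IsOrderedSetPartition {α : Type*} [DecidableEq α] (S : Finset α) (L : List (Finset α)) :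
    Prop :=
  (∀ T ∈ L, T ≠ ∅) ∧ L.Pairwise Disjoint ∧ L.foldr (· ∪ ·) ∅ = S

/-- The type of ordered set partitions of the finite set `S`. -/
def OrderedSetPartition {α : Type*} [DecidableEq α] (S : Finset α) :=
  {L : List (Finset α) // IsOrderedSetPartition S L}

/-- The ordered Bell number `B n`: the number of ordered set partitions of an `n`-element set. -/
noncomputable def orderedBell (n : ℕ) : ℕ :=
  Nat.card (OrderedSetPartition (Finset.univ : Finset (Fin n)))

/-- A hierarchical ordering (society) on the finite set `S`: an (unordered) set partition of `S`
into nonempty blocks, together with an ordered set partition of each block. -/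
def HierarchicalOrdering {α : Type*} [DecidableEq α] (S : Finset α) :=
  (P : Finpartition S) × ((b : P.parts) → OrderedSetPartition (b : Finset α))

/-- `H n`: the number of hierarchical orderings on an `n`-element set. -/
noncomputable def hier (n : ℕ) : ℕ :=
  Nat.card (HierarchicalOrdering (Finset.univ : Finset (Fin n)))


namespace OSPAux

variable {α β : Type*} [DecidableEq α] [DecidableEq β]

lemma subset_foldr {L : List (Finset α)} {b : Finset α} (hb : b ∈ L) :
    b ⊆ L.foldr (· ∪ ·) ∅ := by
  induction L with
  | nil => simp at hb
  | cons a l ih =>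
    rcases List.mem_cons.1 hb with h | h
    · subst h; exact Finset.subset_union_left
    · exact (ih h).trans Finset.subset_union_right

lemma foldr_map_distrib (f : Finset α → Finset β) (hf0 : f ∅ = ∅)
    (hf : ∀ a b, f (a ∪ b) = f a ∪ f b) (L : List (Finset α)) :
    (L.map f).foldr (· ∪ ·) ∅ = f (L.foldr (· ∪ ·) ∅) := by
  induction L with
  | nil => simp [hf0]
  | cons a l ih => simp [ih, hf]

lemma isOSP_map_image (e : α ≃ β) {S : Finset α} {L : List (Finset α)}
    (h : IsOrderedSetPartition S L) :
    IsOrderedSetPartition (S.image e) (L.map (Finset.image e)) := by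
  obtain ⟨h1, h2, h3⟩ := h
  refine ⟨?_, ?_, ?_⟩
  · intro T hT
    obtain ⟨b, hb, rfl⟩ := List.mem_map.1 hT
    simpa [Finset.image_eq_empty] using h1 b hb
  · rw [List.pairwise_map]
    exact h2.imp fun hd => (Finset.disjoint_image e.injective).2 hd
  · rw [foldr_map_distrib (Finset.image e) (by simp) (fun a b => Finset.image_union ..), h3]

/-- Transport ordered set partitions along an equivalence of the ambient types. -/
def congrEquiv (e : α ≃ β) (S : Finset α) :
    OrderedSetPartition S ≃ OrderedSetPartition (S.image e) where
  toFun L := ⟨L.1.map (Finset.image e), isOSP_map_image e L.2⟩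
  invFun L := ⟨L.1.map (Finset.image e.symm), by
    have := isOSP_map_image e.symm L.2
    rwa [Finset.image_image, show (⇑e.symm ∘ ⇑e : α → α) = id by ext x; simp,
      Finset.image_id] at this⟩
  left_inv L := by
    apply Subtype.ext
    simp only [List.map_map]
    have : (Finset.image e.symm ∘ Finset.image e : Finset α → Finset α) = id := by
      funext b; simp [Finset.image_image]
    rw [this, List.map_id]
  right_inv L := by
    apply Subtype.ext
    simp only [List.map_map]
    have : (Finset.image e ∘ Finset.image e.symm : Finset β → Finset β) = id := by
      funext b; simp [Finset.image_image]
    rw [this, List.map_id]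

/-- Ordered set partitions of `S` biject with ordered set partitions of `univ : Finset ↥S`. -/
def subtypeEquiv (S : Finset α) :
    OrderedSetPartition S ≃ OrderedSetPartition (Finset.univ : Finset {x // x ∈ S}) where
  toFun L := ⟨L.1.map (Finset.subtype (· ∈ S)), by
    obtain ⟨h1, h2, h3⟩ := L.2
    have hsub : ∀ b ∈ L.1, b ⊆ S := fun b hb => h3 ▸ subset_foldr hb
    refine ⟨?_, ?_, ?_⟩
    · intro T hT
      obtain ⟨b, hb, rfl⟩ := List.mem_map.1 hT
      obtain ⟨x, hx⟩ := Finset.nonempty_iff_ne_empty.2 (h1 b hb)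
      exact Finset.nonempty_iff_ne_empty.1 ⟨⟨x, hsub b hb hx⟩, by simp [hx]⟩
    · rw [List.pairwise_map]
      refine h2.imp ?_
      intro a b hab
      rw [Finset.disjoint_left] at hab ⊢
      intro x hx hx'
      exact hab (by simpa using hx) (by simpa using hx')
    · rw [foldr_map_distrib (Finset.subtype (· ∈ S)) (by ext x; simp)
        (fun a b => by ext x; simp), h3]
      ext x; simp⟩
  invFun L := ⟨L.1.map (Finset.map (Function.Embedding.subtype (· ∈ S))), by
    obtain ⟨h1, h2, h3⟩ := L.2
    refine ⟨?_, ?_, ?_⟩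
    · intro T hT
      obtain ⟨b, hb, rfl⟩ := List.mem_map.1 hT
      simpa [Finset.map_eq_empty] using h1 b hb
    · rw [List.pairwise_map]
      refine h2.imp ?_
      intro a b hab
      rw [Finset.disjoint_left] at hab ⊢
      rintro x hx hx'
      simp only [Finset.mem_map, Function.Embedding.coe_subtype] at hx hx'
      obtain ⟨y, hy, rfl⟩ := hx
      obtain ⟨z, hz, hzy⟩ := hx'
      exact hab hy (by rwa [show z = y from Subtype.ext hzy] at hz)
    · rw [foldr_map_distrib _ (by simp) (fun a b => by
        ext x
        simp only [Finset.mem_map, Function.Embedding.coe_subtype, Finset.mem_union]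
        constructor
        · rintro ⟨y, hy | hy, rfl⟩
          · exact Or.inl ⟨y, hy, rfl⟩
          · exact Or.inr ⟨y, hy, rfl⟩
        · rintro (⟨y, hy, rfl⟩ | ⟨y, hy, rfl⟩)
          · exact ⟨y, Or.inl hy, rfl⟩
          · exact ⟨y, Or.inr hy, rfl⟩) , h3]
      ext x
      simp only [Finset.mem_map, Function.Embedding.coe_subtype, Finset.mem_univ, true_and]
      constructor
      · rintro ⟨y, -, rfl⟩; exact y.2
      · intro hx; exact ⟨⟨x, hx⟩, by simp⟩⟩
  left_inv L := by
    apply Subtype.ext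
    simp only [List.map_map]
    obtain ⟨h1, h2, h3⟩ := L.2
    have hsub : ∀ b ∈ L.1, b ⊆ S := fun b hb => h3 ▸ subset_foldr hb
    rw [show L.1.map _ = L.1.map id from
      List.map_congr_left fun b hb => ?_, List.map_id]
    simp only [Function.comp_apply, id_eq]
    exact Finset.subtype_map_of_mem (fun x hx => hsub b hb hx)
  right_inv L := by
    apply Subtype.ext
    simp only [List.map_map]
    rw [show L.1.map _ = L.1.map id from
      List.map_congr_left fun b _ => ?_, List.map_id]
    simp only [Function.comp_apply, id_eq]
    ext ⟨x, hx⟩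
    simp only [Finset.mem_subtype, Finset.mem_map, Function.Embedding.coe_subtype]
    exact ⟨fun ⟨y, hy, h⟩ => by rwa [show (⟨x, hx⟩ : {x // x ∈ S}) = y from Subtype.ext h.symm],
      fun h => ⟨⟨x, hx⟩, h, rfl⟩⟩

lemma nodup_of_isOSP {S : Finset α} {L : List (Finset α)} (h : IsOrderedSetPartition S L) :
    L.Nodup := by
  obtain ⟨h1, h2, -⟩ := h
  refine List.Pairwise.imp_of_mem ?_ h2
  intro a b ha _ hab
  intro hEq
  subst hEq
  exact h1 a ha (by simpa using disjoint_self.1 hab)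

instance instFiniteOSP [Fintype α] (S : Finset α) : Finite (OrderedSetPartition S) := by
  refine Finite.of_injective
    (fun L : OrderedSetPartition S =>
      (⟨L.1, nodup_of_isOSP L.2⟩ : {l : List (Finset α) // l.Nodup})) ?_
  intro a b h
  apply Subtype.ext
  simpa using congrArg Subtype.val h

lemma natCard_osp [Fintype α] (S : Finset α) :
    Nat.card (OrderedSetPartition S) = orderedBell S.card := by
  rw [orderedBell]
  refine Nat.card_congr ?_
  refine (subtypeEquiv S).trans ?_
  have e := S.equivFin
  have himg : (Finset.univ : Finset {x // x ∈ S}).image e = Finset.univ := by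
    ext j
    simp only [Finset.mem_image, Finset.mem_univ, true_and, iff_true]
    obtain ⟨⟨a, ha⟩, h⟩ := e.surjective j
    exact ⟨⟨a, ha⟩, h⟩
  have := congrEquiv e (Finset.univ : Finset {x // x ∈ S})
  rwa [himg] at this

end OSPAux

namespace OSPAux

lemma hier_eq_sum (n : ℕ) :
    hier n = ∑ P : Finpartition (Finset.univ : Finset (Fin n)),
      ∏ b ∈ P.parts, orderedBell b.card := by
  classical
  haveI : ∀ (b : Finset (Fin n)), Fintype (OrderedSetPartition b) :=
    fun b => Fintype.ofFinite _
  have h0 : hier n = Nat.card ((P : Finpartition (Finset.univ : Finset (Fin n))) ×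
      ((b : P.parts) → OrderedSetPartition (b : Finset (Fin n)))) := rfl
  rw [h0, Nat.card_eq_fintype_card, Fintype.card_sigma]
  refine Finset.sum_congr rfl fun P _ => ?_
  rw [Fintype.card_pi]
  rw [← Finset.prod_coe_sort P.parts (fun b => orderedBell b.card)]
  refine Finset.prod_congr rfl fun b _ => ?_
  rw [← natCard_osp (b : Finset (Fin n)), Nat.card_eq_fintype_card]

/-- The type of a partition: `typ P j` is the number of parts of cardinality `j+1`. -/
def typ {n : ℕ} (P : Finpartition (Finset.univ : Finset (Fin n))) : Fin n → ℕ :=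
  fun j => #(P.parts.filter fun b => b.card = (j : ℕ) + 1)

/-- The size-index of a block, as an element of `Fin n`. -/
def sIdx {n : ℕ} [NeZero n] (b : Finset (Fin n)) : Fin n :=
  ⟨b.card - 1, by
    have h1 : b.card ≤ n := by simpa using Finset.card_le_univ b
    have h2 : 0 < n := Nat.pos_of_ne_zero (NeZero.ne n)
    omega⟩

lemma sIdx_eq_iff {n : ℕ} [NeZero n] {b : Finset (Fin n)} (hb : b.Nonempty) (j : Fin n) :
    sIdx b = j ↔ b.card = (j : ℕ) + 1 := by
  have h1 : 1 ≤ b.card := Finset.card_pos.2 hb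
  constructor
  · intro h
    have := congrArg Fin.val h
    simp only [sIdx] at this
    omega
  · intro h
    apply Fin.ext
    simp [sIdx, h]

lemma prod_parts_group {n : ℕ} [NeZero n] {M : Type*} [CommMonoid M]
    (P : Finpartition (Finset.univ : Finset (Fin n))) (f : ℕ → M) :
    ∏ b ∈ P.parts, f b.card = ∏ j : Fin n, f ((j : ℕ) + 1) ^ typ P j := by
  classical
  rw [← Finset.prod_fiberwise_of_maps_to (g := sIdx) (t := Finset.univ)
      (fun b _ => Finset.mem_univ _) (fun b => f b.card)]
  refine Finset.prod_congr rfl fun j _ => ?_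
  have hfe : P.parts.filter (fun b => sIdx b = j) =
      P.parts.filter (fun b => b.card = (j : ℕ) + 1) := by
    refine Finset.filter_congr fun b hb => ?_
    exact sIdx_eq_iff (P.nonempty_of_mem_parts hb) j
  rw [Finset.prod_congr hfe fun b hb => ?_, Finset.prod_const]
  · rfl
  · rw [(Finset.mem_filter.1 hb).2]

lemma sum_parts_group {n : ℕ} [NeZero n]
    (P : Finpartition (Finset.univ : Finset (Fin n))) (f : ℕ → ℕ) :
    ∑ b ∈ P.parts, f b.card = ∑ j : Fin n, typ P j * f ((j : ℕ) + 1) := by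
  classical
  rw [← Finset.sum_fiberwise_of_maps_to (g := sIdx) (t := Finset.univ)
      (fun b _ => Finset.mem_univ _) (fun b => f b.card)]
  refine Finset.sum_congr rfl fun j _ => ?_
  have hfe : P.parts.filter (fun b => sIdx b = j) =
      P.parts.filter (fun b => b.card = (j : ℕ) + 1) := by
    refine Finset.filter_congr fun b hb => ?_
    exact sIdx_eq_iff (P.nonempty_of_mem_parts hb) j
  rw [Finset.sum_congr hfe fun b hb => ?_, Finset.sum_const, smul_eq_mul]
  · rfl
  · rw [(Finset.mem_filter.1 hb).2]

lemma sum_typ_mul {n : ℕ} [NeZero n] (P : Finpartition (Finset.univ : Finset (Fin n))) :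
    ∑ j : Fin n, ((j : ℕ) + 1) * typ P j = n := by
  have := sum_parts_group P id
  simp only [id] at this
  rw [P.sum_card_parts, Finset.card_univ, Fintype.card_fin] at this
  conv_rhs => rw [this]
  exact Finset.sum_congr rfl fun j _ => mul_comm _ _

lemma typ_le {n : ℕ} (P : Finpartition (Finset.univ : Finset (Fin n))) (j : Fin n) :
    typ P j ≤ n := by
  calc typ P j ≤ #P.parts := Finset.card_filter_le _ _
  _ ≤ #(Finset.univ : Finset (Fin n)) := P.card_parts_le_card
  _ = n := by simp

end OSPAux

namespace OSPAux

section Fiberwise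

variable {X Y I : Type*} (f : X → I) (g : Y → I)

private lemma key_symm (F : (i : I) → ({x // f x = i} ≃ {y // g y = i}))
    {i j : I} (h : i = j) (y : Y) (hy : g y = i) (hy' : g y = j) :
    (((F j).symm ⟨y, hy'⟩) : X) = (((F i).symm ⟨y, hy⟩) : X) := by
  subst h; rfl

private lemma key_fwd (F : (i : I) → ({x // f x = i} ≃ {y // g y = i}))
    {i j : I} (h : i = j) (x : X) (hx : f x = i) (hx' : f x = j) :
    (((F j) ⟨x, hx'⟩) : Y) = (((F i) ⟨x, hx⟩) : Y) := by
  subst h; rfl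

/-- Fiber-preserving equivalences decompose as families of equivalences between fibers. -/
def fiberCongr : {e : X ≃ Y // ∀ x, g (e x) = f x} ≃
    ((i : I) → ({x // f x = i} ≃ {y // g y = i})) where
  toFun e i :=
    { toFun := fun x => ⟨e.1 x.1, by rw [e.2]; exact x.2⟩
      invFun := fun y => ⟨e.1.symm y.1, by
        have h := e.2 (e.1.symm y.1)
        rw [Equiv.apply_symm_apply] at h
        rw [← h]; exact y.2⟩
      left_inv := fun x => by apply Subtype.ext; simp
      right_inv := fun y => by apply Subtype.ext; simp }
  invFun F := ⟨{
      toFun := fun x => ((F (f x)) ⟨x, rfl⟩ : Y)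
      invFun := fun y => (((F (g y)).symm ⟨y, rfl⟩) : X)
      left_inv := fun x => by
        have h2 : g ((F (f x)) ⟨x, rfl⟩ : Y) = f x := ((F (f x)) ⟨x, rfl⟩).2
        show ((F (g ((F (f x)) ⟨x, rfl⟩ : Y))).symm
            ⟨((F (f x)) ⟨x, rfl⟩ : Y), rfl⟩ : X) = x
        rw [key_symm f g F h2.symm _ h2 rfl]
        have h3 : (⟨((F (f x)) ⟨x, rfl⟩ : Y), h2⟩ : {y // g y = f x}) =
            (F (f x)) ⟨x, rfl⟩ := rfl
        rw [h3, Equiv.symm_apply_apply]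
      right_inv := fun y => by
        have h2 : f (((F (g y)).symm ⟨y, rfl⟩ : {x // f x = g y}) : X) = g y :=
          ((F (g y)).symm ⟨y, rfl⟩).2
        show ((F (f (((F (g y)).symm ⟨y, rfl⟩ : {x // f x = g y}) : X)))
            ⟨(((F (g y)).symm ⟨y, rfl⟩ : {x // f x = g y}) : X), rfl⟩ : Y) = y
        rw [key_fwd f g F h2.symm _ h2 rfl]
        have h3 : (⟨(((F (g y)).symm ⟨y, rfl⟩ : {x // f x = g y}) : X), h2⟩ :
            {x // f x = g y}) = (F (g y)).symm ⟨y, rfl⟩ := rfl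
        rw [h3, Equiv.apply_symm_apply] },
    fun x => ((F (f x)) ⟨x, rfl⟩).2⟩
  left_inv e := Subtype.ext (Equiv.ext fun x => rfl)
  right_inv F := by
    funext i
    apply Equiv.ext
    intro x
    apply Subtype.ext
    have hx : f x.1 = i := x.2
    simp only [Equiv.coe_fn_mk]
    rw [key_fwd f g F hx x.1 rfl hx]

lemma card_compat_equiv [DecidableEq I] [Fintype X] [Fintype Y] [Fintype I]
    [DecidableEq X] [DecidableEq Y]
    (h : ∀ i, Fintype.card {x // f x = i} = Fintype.card {y // g y = i}) :
    Fintype.card {e : X ≃ Y // ∀ x, g (e x) = f x} =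
      ∏ i : I, (Fintype.card {x // f x = i})! := by
  classical
  rw [Fintype.card_congr (fiberCongr f g), Fintype.card_pi]
  exact Finset.prod_congr rfl fun i _ =>
    Fintype.card_equiv (Fintype.equivOfCardEq (h i))

end Fiberwise

end OSPAux

namespace OSPAux

variable {n : ℕ}

/-- The image of a finpartition of `univ : Finset (Fin n)` under a permutation. -/
def mapPerm (P : Finpartition (Finset.univ : Finset (Fin n))) (σ : Equiv.Perm (Fin n)) :
    Finpartition (Finset.univ : Finset (Fin n)) where
  parts := P.parts.image (Finset.image σ)
  supIndep := by
    rw [Finset.supIndep_iff_pairwiseDisjoint]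
    rintro a ha b hb hab
    simp only [Finset.coe_image, Set.mem_image, Finset.mem_coe] at ha hb
    obtain ⟨a', ha', rfl⟩ := ha
    obtain ⟨b', hb', rfl⟩ := hb
    have hne : a' ≠ b' := fun h => hab (by rw [h])
    exact (Finset.disjoint_image σ.injective).2 (P.disjoint ha' hb' hne)
  sup_parts := by
    ext x
    simp only [Finset.mem_sup, Finset.mem_univ, iff_true, id_eq]
    refine ⟨(P.part (σ.symm x)).image σ,
      Finset.mem_image_of_mem _ (P.part_mem.2 (Finset.mem_univ _)), ?_⟩
    have := P.mem_part (Finset.mem_univ (σ.symm x))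
    have h2 := Finset.mem_image_of_mem σ this
    rwa [Equiv.apply_symm_apply] at h2
  bot_notMem := by
    simp only [bot_eq_empty, Finset.mem_image, not_exists]
    rintro b ⟨hb, h⟩
    rw [Finset.image_eq_empty] at h
    subst h
    exact P.bot_notMem (by simpa using hb)

lemma parts_mapPerm (P : Finpartition (Finset.univ : Finset (Fin n))) (σ : Equiv.Perm (Fin n)) :
    (mapPerm P σ).parts = P.parts.image (Finset.image σ) := rfl

lemma typ_mapPerm (P : Finpartition (Finset.univ : Finset (Fin n))) (σ : Equiv.Perm (Fin n)) :
    typ (mapPerm P σ) = typ P := by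
  funext j
  unfold typ
  rw [parts_mapPerm, Finset.filter_image]
  rw [Finset.card_image_of_injective _ (Finset.image_injective σ.injective)]
  congr 1
  refine Finset.filter_congr fun b _ => ?_
  simp [Finset.card_image_of_injective _ σ.injective]

lemma mapPerm_eq_iff (P Q : Finpartition (Finset.univ : Finset (Fin n)))
    (σ : Equiv.Perm (Fin n)) :
    mapPerm P σ = Q ↔ ∀ b ∈ P.parts, b.image σ ∈ Q.parts := by
  constructor
  · rintro rfl b hb
    exact Finset.mem_image_of_mem _ hb
  · intro h
    refine Finpartition.ext ?_
    apply Finset.Subset.antisymm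
    · intro c hc
      rw [parts_mapPerm] at hc
      obtain ⟨b, hb, rfl⟩ := Finset.mem_image.1 hc
      exact h b hb
    · intro c hc
      obtain ⟨x, hx⟩ := Q.nonempty_of_mem_parts hc
      have hx2 : x ∈ (Finset.univ : Finset (Fin n)) := Finset.mem_univ x
      rw [← (mapPerm P σ).sup_parts] at hx2
      rw [Finset.mem_sup] at hx2
      obtain ⟨d, hd, hxd⟩ := hx2
      have hdQ : d ∈ Q.parts := by
        rw [parts_mapPerm] at hd
        obtain ⟨b, hb, rfl⟩ := Finset.mem_image.1 hd
        exact h b hb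
      rwa [Q.eq_of_mem_parts hc hdQ hx hxd]

end OSPAux

namespace OSPAux

variable {n : ℕ}

abbrev PartsT (P : Finpartition (Finset.univ : Finset (Fin n))) :=
  {b : Finset (Fin n) // b ∈ P.parts}

/-- Permutations mapping every part of `P` to a part of `Q`. -/
def Fib (P Q : Finpartition (Finset.univ : Finset (Fin n))) : Type :=
  {σ : Equiv.Perm (Fin n) // ∀ b ∈ P.parts, b.image σ ∈ Q.parts}

instance (P Q : Finpartition (Finset.univ : Finset (Fin n))) : Fintype (Fib P Q) := by
  unfold Fib; infer_instance

/-- Permutations inducing a prescribed bijection `e` on parts. -/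
def FibE (P Q : Finpartition (Finset.univ : Finset (Fin n))) (e : PartsT P ≃ PartsT Q) : Type :=
  {σ : Equiv.Perm (Fin n) //
    ∀ b : PartsT P, (b : Finset (Fin n)).image σ = ((e b : PartsT Q) : Finset (Fin n))}

instance (P Q : Finpartition (Finset.univ : Finset (Fin n))) (e : PartsT P ≃ PartsT Q) :
    Fintype (FibE P Q e) := by
  unfold FibE; infer_instance

private lemma key2 {P Q : Finpartition (Finset.univ : Finset (Fin n))}
    {e : PartsT P ≃ PartsT Q}
    (F : (b : PartsT P) → ({x // x ∈ (b : Finset (Fin n))} ≃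
      {y // y ∈ ((e b : PartsT Q) : Finset (Fin n))}))
    {b b' : PartsT P} (hb : b = b') (z : Fin n)
    (hz : z ∈ (b : Finset (Fin n))) (hz' : z ∈ (b' : Finset (Fin n))) :
    ((F b' ⟨z, hz'⟩ : {y // y ∈ ((e b' : PartsT Q) : Finset (Fin n))}) : Fin n) =
      ((F b ⟨z, hz⟩ : {y // y ∈ ((e b : PartsT Q) : Finset (Fin n))}) : Fin n) := by
  subst hb; rfl

/-- Part-indexed decomposition of permutations realizing a fixed part-bijection. -/
noncomputable def fibEEquiv (P Q : Finpartition (Finset.univ : Finset (Fin n)))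
    (e : PartsT P ≃ PartsT Q)
    (he : ∀ b : PartsT P,
      ((e b : PartsT Q) : Finset (Fin n)).card = (b : Finset (Fin n)).card) :
    FibE P Q e ≃ ((b : PartsT P) → ({x // x ∈ (b : Finset (Fin n))} ≃
      {y // y ∈ ((e b : PartsT Q) : Finset (Fin n))})) where
  toFun σ b :=
    { toFun := fun x => ⟨σ.1 x.1, by rw [← σ.2 b]; exact Finset.mem_image_of_mem _ x.2⟩
      invFun := fun y => ⟨σ.1.symm y.1, by
        have hy : y.1 ∈ (b : Finset (Fin n)).image σ.1 := by rw [σ.2 b]; exact y.2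
        obtain ⟨x, hx, hxy⟩ := Finset.mem_image.1 hy
        rw [← hxy, Equiv.symm_apply_apply]; exact hx⟩
      left_inv := fun x => Subtype.ext (by simp)
      right_inv := fun y => Subtype.ext (by simp) }
  invFun F := by
    classical
    set bof : Fin n → PartsT P := fun x => ⟨P.part x, P.part_mem.2 (Finset.mem_univ x)⟩ with hbof
    have hmem : ∀ x : Fin n, x ∈ (bof x : Finset (Fin n)) :=
      fun x => P.mem_part (Finset.mem_univ x)
    set gl : Fin n → Fin n := fun x => ((F (bof x)) ⟨x, hmem x⟩ : Fin n) with hgl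
    have glmem : ∀ x : Fin n, gl x ∈ ((e (bof x) : PartsT Q) : Finset (Fin n)) :=
      fun x => ((F (bof x)) ⟨x, hmem x⟩).2
    have ginj : Function.Injective gl := by
      intro x y hxy
      have hbxy : bof x = bof y := by
        apply e.injective
        apply Subtype.ext
        exact Q.eq_of_mem_parts (e (bof x)).2 (e (bof y)).2 (glmem x) (hxy ▸ glmem y)
      have h2 : gl y = ((F (bof x)) ⟨y, hbxy ▸ hmem y⟩ : Fin n) := by
        rw [hgl]
        exact key2 F hbxy y (hbxy ▸ hmem y) (hmem y)
      have h3 : ((F (bof x)) ⟨x, hmem x⟩ : Fin n) =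
          ((F (bof x)) ⟨y, hbxy ▸ hmem y⟩ : Fin n) := by rw [← h2]; exact hxy
      have h4 := (F (bof x)).injective (Subtype.ext h3)
      exact congrArg Subtype.val h4
    refine ⟨Equiv.ofBijective gl (Finite.injective_iff_bijective.1 ginj), ?_⟩
    intro b
    have hsub : (b : Finset (Fin n)).image gl ⊆ ((e b : PartsT Q) : Finset (Fin n)) := by
      intro z hz
      obtain ⟨x, hx, rfl⟩ := Finset.mem_image.1 hz
      have hbx : bof x = b := Subtype.ext (P.part_eq_of_mem b.2 hx)
      have := glmem x
      rwa [hbx] at this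
    have hcard : ((e b : PartsT Q) : Finset (Fin n)).card ≤
        ((b : Finset (Fin n)).image gl).card := by
      rw [Finset.card_image_of_injective _ ginj, he b]
    exact Finset.eq_of_subset_of_card_le hsub hcard
  left_inv σ := Subtype.ext (Equiv.ext fun x => rfl)
  right_inv F := by
    funext b
    apply Equiv.ext
    intro x
    apply Subtype.ext
    have hbx : (⟨P.part x.1, P.part_mem.2 (Finset.mem_univ x.1)⟩ : PartsT P) = b :=
      Subtype.ext (P.part_eq_of_mem b.2 x.2)
    exact (key2 F hbx x.1 (P.mem_part (Finset.mem_univ x.1)) x.2).symm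

end OSPAux

namespace OSPAux

variable {n : ℕ}

lemma card_parts_eq_sum_typ [NeZero n] (P : Finpartition (Finset.univ : Finset (Fin n))) :
    P.parts.card = ∑ j : Fin n, typ P j := by
  have h := sum_parts_group P (fun _ => 1)
  simpa using h

lemma card_sIdx_fiber [NeZero n] (P : Finpartition (Finset.univ : Finset (Fin n))) (j : Fin n) :
    Fintype.card {b : PartsT P // sIdx (b : Finset (Fin n)) = j} = typ P j := by
  classical
  rw [Fintype.card_congr
    (Equiv.subtypeSubtypeEquivSubtypeInter (· ∈ P.parts) (fun b => sIdx b = j))]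
  rw [Fintype.card_subtype]
  have h1 : Finset.univ.filter (fun b : Finset (Fin n) => b ∈ P.parts ∧ sIdx b = j) =
      P.parts.filter (fun b => sIdx b = j) := by
    ext b; simp [and_comm]
  rw [h1]
  unfold typ
  have h2 : P.parts.filter (fun b => sIdx b = j) =
      P.parts.filter (fun b => b.card = (j : ℕ) + 1) :=
    Finset.filter_congr fun b hb => sIdx_eq_iff (P.nonempty_of_mem_parts hb) j
  rw [h2]

/-- Size-preserving bijections between the parts of `P` and the parts of `Q`. -/
def CPE [NeZero n] (P Q : Finpartition (Finset.univ : Finset (Fin n))) : Type :=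
  {e : PartsT P ≃ PartsT Q //
    ∀ b : PartsT P, sIdx ((e b : PartsT Q) : Finset (Fin n)) = sIdx (b : Finset (Fin n))}

instance [NeZero n] (P Q : Finpartition (Finset.univ : Finset (Fin n))) :
    Fintype (CPE P Q) := by
  unfold CPE; infer_instance

lemma card_CPE [NeZero n] (P Q : Finpartition (Finset.univ : Finset (Fin n)))
    (h : typ P = typ Q) :
    Fintype.card (CPE P Q) = ∏ j : Fin n, (typ P j)! := by
  classical
  have := card_compat_equiv (fun b : PartsT P => sIdx (b : Finset (Fin n)))
    (fun c : PartsT Q => sIdx (c : Finset (Fin n)))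
    (fun j => by rw [card_sIdx_fiber P j, card_sIdx_fiber Q j, h])
  rw [show Fintype.card (CPE P Q) =
    Fintype.card {e : PartsT P ≃ PartsT Q //
      ∀ b, (fun c : PartsT Q => sIdx (c : Finset (Fin n))) (e b) =
        (fun b : PartsT P => sIdx (b : Finset (Fin n))) b} from Fintype.card_congr (Equiv.refl _)]
  rw [this]
  exact Finset.prod_congr rfl fun j _ => by rw [card_sIdx_fiber P j]

private lemma sigma_fib_ext [NeZero n] {P Q : Finpartition (Finset.univ : Finset (Fin n))}
    {a b : Σ e : CPE P Q, FibE P Q e.1}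
    (h1 : a.1 = b.1) (h2 : a.2.1 = b.2.1) : a = b := by
  rcases a with ⟨ea, τa⟩
  rcases b with ⟨eb, τb⟩
  cases h1
  simp only at h2
  cases Subtype.ext h2
  rfl

/-- Decomposition of `Fib P Q` according to the induced bijection on parts. -/
noncomputable def fibSigma [NeZero n] (P Q : Finpartition (Finset.univ : Finset (Fin n)))
    (hc : Fintype.card (PartsT P) = Fintype.card (PartsT Q)) :
    Fib P Q ≃ Σ e : CPE P Q, FibE P Q e.1 where
  toFun σ := by
    refine ⟨⟨Equiv.ofBijective (fun b : PartsT P =>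
        (⟨(b : Finset (Fin n)).image σ.1, σ.2 b.1 b.2⟩ : PartsT Q)) ?_, ?_⟩, ⟨σ.1, fun b => rfl⟩⟩
    · rw [Fintype.bijective_iff_injective_and_card]
      refine ⟨?_, hc⟩
      intro a b hab
      apply Subtype.ext
      have := congrArg Subtype.val hab
      simp only at this
      apply Finset.image_injective σ.1.injective this
    · intro b
      apply Fin.ext
      simp [sIdx, Finset.card_image_of_injective _ σ.1.injective, Equiv.ofBijective]
  invFun p := ⟨p.2.1, fun b hb => by rw [p.2.2 ⟨b, hb⟩]; exact (p.1.1 ⟨b, hb⟩).2⟩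
  left_inv σ := Subtype.ext rfl
  right_inv p := by
    rcases p with ⟨e, τ⟩
    refine sigma_fib_ext ?_ rfl
    exact Subtype.ext (Equiv.ext fun b => Subtype.ext (τ.2 b))

end OSPAux

namespace OSPAux

variable {n : ℕ}

lemma card_fibE (P Q : Finpartition (Finset.univ : Finset (Fin n)))
    (e : PartsT P ≃ PartsT Q)
    (he : ∀ b : PartsT P,
      ((e b : PartsT Q) : Finset (Fin n)).card = (b : Finset (Fin n)).card) :
    Fintype.card (FibE P Q e) = ∏ b ∈ P.parts, (b.card)! := by
  classical
  rw [Fintype.card_congr (fibEEquiv P Q e he), Fintype.card_pi]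
  rw [← Finset.prod_coe_sort P.parts (fun b => (b.card)!)]
  refine Finset.prod_congr rfl fun b _ => ?_
  have hce : Fintype.card {x // x ∈ (b : Finset (Fin n))} =
      Fintype.card {y // y ∈ ((e b : PartsT Q) : Finset (Fin n))} := by
    simp only [Fintype.card_coe, he b]
  rw [Fintype.card_equiv (Fintype.equivOfCardEq hce)]
  simp [Fintype.card_coe]

lemma card_fib [NeZero n] (P Q : Finpartition (Finset.univ : Finset (Fin n)))
    (h : typ P = typ Q) :
    Fintype.card (Fib P Q) =
      (∏ j : Fin n, (typ P j)!) * ∏ b ∈ P.parts, (b.card)! := by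
  classical
  have hc : Fintype.card (PartsT P) = Fintype.card (PartsT Q) := by
    simp only [Fintype.card_coe]
    rw [card_parts_eq_sum_typ P, card_parts_eq_sum_typ Q, h]
  rw [Fintype.card_congr (fibSigma P Q hc), Fintype.card_sigma]
  have he : ∀ ee : CPE P Q, ∀ b : PartsT P,
      ((ee.1 b : PartsT Q) : Finset (Fin n)).card = (b : Finset (Fin n)).card := by
    intro ee b
    have h1 := ee.2 b
    have h2 : ((ee.1 b : PartsT Q) : Finset (Fin n)).Nonempty :=
      Q.nonempty_of_mem_parts (ee.1 b).2
    have h3 : ((b : PartsT P) : Finset (Fin n)).Nonempty :=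
      P.nonempty_of_mem_parts b.2
    have h4 := congrArg Fin.val h1
    simp only [sIdx] at h4
    have h5 := Finset.card_pos.2 h2
    have h6 := Finset.card_pos.2 h3
    omega
  rw [Finset.sum_congr rfl (fun ee _ => card_fibE P Q ee.1 (he ee))]
  rw [Finset.sum_const, Finset.card_univ, smul_eq_mul, card_CPE P Q h]

end OSPAux

namespace OSPAux

variable {n : ℕ}

lemma exists_partition_of_type [NeZero n] (m : Fin n → ℕ)
    (hm : ∑ j : Fin n, ((j : ℕ) + 1) * m j = n) :
    ∃ P : Finpartition (Finset.univ : Finset (Fin n)), typ P = m := by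
  classical
  let B := Σ j : Fin n, Fin (m j)
  let T := Σ p : B, Fin ((p.1 : ℕ) + 1)
  have hcard : Fintype.card T = Fintype.card (Fin n) := by
    rw [Fintype.card_fin, Fintype.card_sigma]
    rw [show (∑ p : B, Fintype.card (Fin ((p.1 : ℕ) + 1))) =
        ∑ p : B, ((p.1 : ℕ) + 1) from Finset.sum_congr rfl fun p _ => Fintype.card_fin _]
    rw [← Finset.univ_sigma_univ, Finset.sum_sigma]
    have hsum : ∀ a : Fin n, (∑ s : Fin (m a), (((⟨a, s⟩ : B).fst : ℕ) + 1)) =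
        ((a : ℕ) + 1) * m a := by
      intro a
      show (∑ _s : Fin (m a), ((a : ℕ) + 1)) = ((a : ℕ) + 1) * m a
      rw [Finset.sum_const, Finset.card_univ, Fintype.card_fin, smul_eq_mul, mul_comm]
    rw [Finset.sum_congr rfl fun a _ => hsum a, hm]
  let e : T ≃ Fin n := Fintype.equivOfCardEq hcard
  let blk : B → Finset (Fin n) :=
    fun p => Finset.univ.image fun i : Fin ((p.1 : ℕ) + 1) => e ⟨p, i⟩
  have hinj : ∀ p : B, Function.Injective fun i : Fin ((p.1 : ℕ) + 1) => e ⟨p, i⟩ :=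
    fun p i i' h =>
      sigma_mk_injective (β := fun p : B => Fin ((p.1 : ℕ) + 1)) (e.injective h)
  have hblkcard : ∀ p : B, (blk p).card = (p.1 : ℕ) + 1 := by
    intro p
    rw [Finset.card_image_of_injective _ (hinj p), Finset.card_univ, Fintype.card_fin]
  have hblkne : ∀ p : B, blk p ≠ ∅ := by
    intro p h
    have := hblkcard p
    rw [h] at this
    simp at this
  have hdisj : ∀ p q : B, p ≠ q → Disjoint (blk p) (blk q) := by
    intro p q hpq
    rw [Finset.disjoint_left]
    rintro x hx hx'
    obtain ⟨i, _, rfl⟩ := Finset.mem_image.1 hx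
    obtain ⟨i', _, hi'⟩ := Finset.mem_image.1 hx'
    exact hpq (congrArg Sigma.fst
      (show (⟨q, i'⟩ : T) = ⟨p, i⟩ from e.injective hi')).symm
  have hblkinj : Function.Injective blk := by
    intro p q h
    by_contra hpq
    have hd := hdisj p q hpq
    rw [h, disjoint_self] at hd
    exact hblkne q hd
  have hsup : (Finset.univ.image blk).sup id = (Finset.univ : Finset (Fin n)) := by
    apply Finset.Subset.antisymm (Finset.subset_univ _)
    intro x _
    rw [Finset.mem_sup]
    refine ⟨blk (e.symm x).1, Finset.mem_image_of_mem _ (Finset.mem_univ _), ?_⟩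
    simp only [id_eq, blk, Finset.mem_image]
    refine ⟨(e.symm x).2, Finset.mem_univ _, ?_⟩
    rw [show (⟨(e.symm x).1, (e.symm x).2⟩ : T) = e.symm x from rfl, Equiv.apply_symm_apply]
  have hsupind : (Finset.univ.image blk).SupIndep id := by
    rw [Finset.supIndep_iff_pairwiseDisjoint]
    rintro a ha b hb hab
    simp only [Finset.coe_image, Set.mem_image, Finset.mem_coe] at ha hb
    obtain ⟨p, _, rfl⟩ := ha
    obtain ⟨q, _, rfl⟩ := hb
    exact hdisj p q (fun h => hab (by rw [h]))
  refine ⟨Finpartition.ofErase (Finset.univ.image blk) hsupind hsup, ?_⟩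
  have hparts : (Finpartition.ofErase (Finset.univ.image blk) hsupind hsup).parts =
      Finset.univ.image blk := by
    simp only [Finpartition.ofErase]
    apply Finset.erase_eq_of_notMem
    simp only [bot_eq_empty, Finset.mem_image, not_exists]
    rintro p ⟨_, h⟩
    exact hblkne p h
  funext j
  unfold typ
  rw [hparts, Finset.filter_image, Finset.card_image_of_injective _ hblkinj]
  have hfe : Finset.univ.filter (fun p : B => (blk p).card = (j : ℕ) + 1) =
      Finset.univ.filter (fun p : B => p.1 = j) := by
    refine Finset.filter_congr fun p _ => ?_
    rw [hblkcard p]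
    constructor
    · intro h; exact Fin.ext (by omega)
    · intro h; rw [h]
  rw [hfe]
  rw [← Fintype.card_subtype]
  rw [Fintype.card_congr (show {p : B // p.1 = j} ≃ Fin (m j) from
    { toFun := fun p => p.2 ▸ p.1.2
      invFun := fun i => ⟨⟨j, i⟩, rfl⟩
      left_inv := by rintro ⟨⟨j', i⟩, h⟩; dsimp only at h; subst h; rfl
      right_inv := fun i => rfl })]
  exact Fintype.card_fin _

end OSPAux

namespace OSPAux

variable {n : ℕ}

lemma key_count [NeZero n] (m : Fin n → ℕ)
    (hm : ∑ j : Fin n, ((j : ℕ) + 1) * m j = n) :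
    #(Finset.univ.filter fun P : Finpartition (Finset.univ : Finset (Fin n)) => typ P = m) *
      ((∏ j : Fin n, (m j)!) * ∏ j : Fin n, (((j : ℕ) + 1)!) ^ m j) = n ! := by
  classical
  obtain ⟨P₀, hP₀⟩ := exists_partition_of_type m hm
  have hfib : ∀ Q ∈ (Finset.univ.filter
      fun Q : Finpartition (Finset.univ : Finset (Fin n)) => typ Q = m),
      #(Finset.univ.filter fun σ : Equiv.Perm (Fin n) => mapPerm P₀ σ = Q) =
        (∏ j : Fin n, (m j)!) * ∏ j : Fin n, (((j : ℕ) + 1)!) ^ m j := by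
    intro Q hQ
    have hQm : typ Q = m := (Finset.mem_filter.1 hQ).2
    have e1 : (Finset.univ.filter fun σ : Equiv.Perm (Fin n) => mapPerm P₀ σ = Q) =
        (Finset.univ.filter fun σ : Equiv.Perm (Fin n) =>
          ∀ b ∈ P₀.parts, b.image σ ∈ Q.parts) :=
      Finset.filter_congr fun σ _ => mapPerm_eq_iff P₀ Q σ
    rw [e1, ← Fintype.card_subtype]
    have e2 : Fintype.card {σ : Equiv.Perm (Fin n) // ∀ b ∈ P₀.parts, b.image σ ∈ Q.parts} =
        Fintype.card (Fib P₀ Q) := Fintype.card_congr (Equiv.refl _)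
    rw [e2, card_fib P₀ Q (hP₀.trans hQm.symm), hP₀]
    congr 1
    have := prod_parts_group (M := ℕ) P₀ (fun k => k !)
    rw [this, hP₀]
  have hmain : n ! =
      #(Finset.univ.filter
        fun P : Finpartition (Finset.univ : Finset (Fin n)) => typ P = m) *
        ((∏ j : Fin n, (m j)!) * ∏ j : Fin n, (((j : ℕ) + 1)!) ^ m j) := by
    calc n ! = #(Finset.univ : Finset (Equiv.Perm (Fin n))) := by
          rw [Finset.card_univ, Fintype.card_perm, Fintype.card_fin]
      _ = ∑ Q ∈ (Finset.univ.filter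
            fun Q : Finpartition (Finset.univ : Finset (Fin n)) => typ Q = m),
            #(Finset.univ.filter fun σ : Equiv.Perm (Fin n) => mapPerm P₀ σ = Q) :=
          Finset.card_eq_sum_card_fiberwise fun σ _ =>
            Finset.mem_filter.2 ⟨Finset.mem_univ _, by rw [typ_mapPerm, hP₀]⟩
      _ = ∑ _Q ∈ (Finset.univ.filter
            fun Q : Finpartition (Finset.univ : Finset (Fin n)) => typ Q = m),
            ((∏ j : Fin n, (m j)!) * ∏ j : Fin n, (((j : ℕ) + 1)!) ^ m j) :=
          Finset.sum_congr rfl hfib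
      _ = _ := by rw [Finset.sum_const, smul_eq_mul]
  exact hmain.symm

end OSPAux


/-- **Explicit formula for `H_n`.** For every `n ≥ 1`,
`H_n = ∑_{(m_1,…,m_n)} n! · (∏_j B_j^{m_j}) / (∏_j m_j!·(j!)^{m_j})`, the sum being over all
tuples `(m_1,…,m_n)` of nonnegative integers with `∑_j j·m_j = n`.  (Here `m : Fin n → ℕ`
encodes the tuple via `m_j = m ⟨j-1⟩`; since `∑_j j·m_j = n` forces each `m_j ≤ n`, the
finite index set below contains every solution.) -/
theorem hier_explicit_formula (n : ℕ) (hn : 1 ≤ n) :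
    (hier n : ℚ) =
      ∑ m ∈ (Fintype.piFinset fun _ : Fin n => Finset.range (n + 1)).filter
          (fun m => ∑ j : Fin n, ((j : ℕ) + 1) * m j = n),
        (n ! : ℚ) * (∏ j : Fin n, (orderedBell ((j : ℕ) + 1) : ℚ) ^ m j) /
          (∏ j : Fin n, (m j)! * (((j : ℕ) + 1)! : ℚ) ^ m j) := by
  
  classical
  haveI : NeZero n := ⟨by omega⟩
  rw [OSPAux.hier_eq_sum n]
  push_cast
  have hgrp : ∀ P : Finpartition (Finset.univ : Finset (Fin n)),
      (∏ b ∈ P.parts, (orderedBell b.card : ℚ)) =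
        ∏ j : Fin n, (orderedBell ((j : ℕ) + 1) : ℚ) ^ OSPAux.typ P j :=
    fun P => OSPAux.prod_parts_group P (fun k => (orderedBell k : ℚ))
  rw [Finset.sum_congr rfl fun P _ => hgrp P]
  have hmaps : ∀ P : Finpartition (Finset.univ : Finset (Fin n)), P ∈ Finset.univ →
      OSPAux.typ P ∈ (Fintype.piFinset fun _ : Fin n => Finset.range (n + 1)).filter
        (fun m => ∑ j : Fin n, ((j : ℕ) + 1) * m j = n) := by
    intro P _
    refine Finset.mem_filter.2 ⟨Fintype.mem_piFinset.2 fun j => Finset.mem_range.2 ?_,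
      OSPAux.sum_typ_mul P⟩
    exact Nat.lt_succ_of_le (OSPAux.typ_le P j)
  rw [← Finset.sum_fiberwise_of_maps_to hmaps
    (fun P => ∏ j : Fin n, (orderedBell ((j : ℕ) + 1) : ℚ) ^ OSPAux.typ P j)]
  refine Finset.sum_congr rfl fun m hm => ?_
  have hmm : ∑ j : Fin n, ((j : ℕ) + 1) * m j = n := (Finset.mem_filter.1 hm).2
  rw [Finset.sum_congr rfl (fun P hP => by rw [(Finset.mem_filter.1 hP).2] :
    ∀ P ∈ Finset.univ.filter
      (fun P : Finpartition (Finset.univ : Finset (Fin n)) => OSPAux.typ P = m),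
      (∏ j : Fin n, (orderedBell ((j : ℕ) + 1) : ℚ) ^ OSPAux.typ P j) =
        ∏ j : Fin n, (orderedBell ((j : ℕ) + 1) : ℚ) ^ m j)]
  rw [Finset.sum_const, nsmul_eq_mul]
  have hkey := OSPAux.key_count m hmm
  have hkeyQ : (#(Finset.univ.filter
      fun P : Finpartition (Finset.univ : Finset (Fin n)) => OSPAux.typ P = m) : ℚ) *
      ((∏ j : Fin n, ((m j)! : ℚ)) * ∏ j : Fin n, (((j : ℕ) + 1)! : ℚ) ^ m j) = (n ! : ℚ) := by
    exact_mod_cast congrArg (Nat.cast (R := ℚ)) hkey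
  have hden : (∏ j : Fin n, ((m j)! : ℚ) * (((j : ℕ) + 1)! : ℚ) ^ m j) =
      (∏ j : Fin n, ((m j)! : ℚ)) * ∏ j : Fin n, (((j : ℕ) + 1)! : ℚ) ^ m j :=
    Finset.prod_mul_distrib
  have hne : (∏ j : Fin n, ((m j)! : ℚ) * (((j : ℕ) + 1)! : ℚ) ^ m j) ≠ 0 := by
    apply Finset.prod_ne_zero_iff.2
    intro j _
    positivity
  rw [eq_div_iff hne, hden]
  rw [← hkeyQ]
  ring
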